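/- For integers 1 ≤ ℓ ≤ min{k, N}, let 𝒩(k,ℓ) denote the number of even closed paths of length 2k on [N] that visit exactly ℓ distinct vertices. Then 𝒩(k,ℓ) ≤ k²·(4k)^{6(k−ℓ)}·N^ℓ. -/

import Mathlib

/-- The multiset of adjacent pairs (edges) traversed by a path, with multiplicity.
A path of length `m` is recorded as a list of `m+1` vertices. -/
def pathEdges {N : ℕ} (P : List (Fin N)) : Multiset (Fin N × Fin N) :=
  ↑(P.zip P.tail)

/-- A (nonempty) path is closed if its first and last vertices coincide. -/
def IsClosedPath {N : ℕ} (P : List (Fin N)) : Prop :=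
  P ≠ [] ∧ P.head? = P.getLast?

/-- An even path: a closed path in which every ordered pair occurs an even number of
times among the adjacent pairs. -/
def IsEvenPath {N : ℕ} (P : List (Fin N)) : Prop :=
  IsClosedPath P ∧ ∀ e : Fin N × Fin N, Even ((pathEdges P).count e)

namespace EvenPathCount

variable {N : ℕ} (w : ℕ → Fin N)

/-- number of times edge `e` is traversed among the first `t` legs -/
def cnt (t : ℕ) (e : Fin N × Fin N) : ℕ :=
  ((Finset.range t).filter (fun s => (w s, w (s+1)) = e)).card

/-- the set of "open" out-edges of `u` at time `t` (odd count so far) -/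
def OutF (t : ℕ) (u : Fin N) : Finset (Fin N) :=
  Finset.univ.filter (fun x => Odd (cnt w t (u, x)))

def lvl (t : ℕ) : ℕ := (OutF w t (w t)).card

def Opening (t : ℕ) : Prop := Even (cnt w t (w t, w (t+1)))

def Fresh (t : ℕ) : Prop := ∀ s ≤ t, w s ≠ w (t+1)

def Special (t : ℕ) : Prop :=
  (Opening w t ∧ ¬ Fresh w t) ∨ (Opening w t ∧ 1 ≤ lvl w t) ∨ (¬ Opening w t ∧ 2 ≤ lvl w t)

instance (t : ℕ) : Decidable (Opening w t) := by unfold Opening; infer_instance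
instance (t : ℕ) : Decidable (Fresh w t) := by unfold Fresh; infer_instance
instance (t : ℕ) : Decidable (Special w t) := by unfold Special; infer_instance

/-- list of distinct vertices among `w 0, ..., w t` in order of first appearance -/
def firstsL : ℕ → List (Fin N)
  | 0 => [w 0]
  | t+1 => if w (t+1) ∈ firstsL t then firstsL t else firstsL t ++ [w (t+1)]

lemma cnt_zero (e : Fin N × Fin N) : cnt w 0 e = 0 := by simp [cnt]

lemma cnt_succ (t : ℕ) (e : Fin N × Fin N) :
    cnt w (t+1) e = cnt w t e + if (w t, w (t+1)) = e then 1 else 0 := by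
  unfold cnt
  rw [Finset.range_add_one, Finset.filter_insert]
  split <;> simp [Finset.card_insert_of_notMem]

lemma cnt_pos_iff (t : ℕ) (e : Fin N × Fin N) :
    0 < cnt w t e ↔ ∃ s < t, (w s, w (s+1)) = e := by
  unfold cnt
  rw [Finset.card_pos]
  constructor
  · rintro ⟨s, hs⟩
    simp only [Finset.mem_filter, Finset.mem_range] at hs
    exact ⟨s, hs.1, hs.2⟩
  · rintro ⟨s, hs1, hs2⟩
    exact ⟨s, by simp [hs1, hs2]⟩

lemma mem_OutF_iff (t : ℕ) (u x : Fin N) :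
    x ∈ OutF w t u ↔ Odd (cnt w t (u, x)) := by simp [OutF]

lemma not_opening_mem (t : ℕ) (h : ¬ Opening w t) : w (t+1) ∈ OutF w t (w t) := by
  rw [mem_OutF_iff]
  exact Nat.not_even_iff_odd.1 h

lemma not_opening_lvl (t : ℕ) (h : ¬ Opening w t) : 1 ≤ lvl w t :=
  Finset.card_pos.2 ⟨_, not_opening_mem w t h⟩ 

lemma mem_firstsL_iff (t : ℕ) (x : Fin N) :
    x ∈ firstsL w t ↔ ∃ s ≤ t, w s = x := by
  induction t with
  | zero => simp [firstsL, eq_comm]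
  | succ t ih =>
    unfold firstsL
    split
    · rename_i h
      rw [ih]
      constructor
      · rintro ⟨s, hs, rfl⟩; exact ⟨s, by omega, rfl⟩
      · rintro ⟨s, hs, rfl⟩
        rcases Nat.eq_or_lt_of_le hs with h' | h'
        · rcases ih.1 (h' ▸ h) with ⟨s', hs', hw⟩; exact ⟨s', hs', h' ▸ hw⟩
        · exact ⟨s, by omega, rfl⟩
    · simp only [List.mem_append, List.mem_singleton, ih]
      constructor
      · rintro (⟨s, hs, rfl⟩ | rfl)
        · exact ⟨s, by omega, rfl⟩
        · exact ⟨t+1, le_refl _, rfl⟩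
      · rintro ⟨s, hs, rfl⟩
        rcases Nat.eq_or_lt_of_le hs with h' | h'
        · right; rw [h']
        · left; exact ⟨s, by omega, rfl⟩

lemma nodup_firstsL (t : ℕ) : (firstsL w t).Nodup := by
  induction t with
  | zero => simp [firstsL]
  | succ t ih =>
    unfold firstsL
    split
    · exact ih
    · rename_i h
      simp [List.nodup_append, ih]
      intro a ha hae
      exact h (hae ▸ ha)

lemma firstsL_succ_eq (t : ℕ) : firstsL w (t+1) =
    if w (t+1) ∈ firstsL w t then firstsL w t else firstsL w t ++ [w (t+1)] := rfl

lemma firstsL_prefix_succ (t : ℕ) : firstsL w t <+: firstsL w (t+1) := by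
  rw [firstsL_succ_eq]
  split
  · exact List.prefix_refl _
  · exact ⟨[w (t+1)], rfl⟩

lemma firstsL_prefix (s t : ℕ) (h : s ≤ t) : firstsL w s <+: firstsL w t := by
  induction t with
  | zero => rw [Nat.le_zero.1 h]
  | succ t ih =>
    rcases Nat.eq_or_lt_of_le h with h' | h'
    · rw [h']
    · exact (ih (by omega)).trans (firstsL_prefix_succ w t)

lemma length_firstsL_pos (t : ℕ) : 0 < (firstsL w t).length :=
  List.length_pos_of_mem ((mem_firstsL_iff w t (w 0)).2 ⟨0, Nat.zero_le t, rfl⟩)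

/-- if the next vertex is fresh, it gets appended to the firsts list -/
lemma firstsL_succ_of_fresh (t : ℕ) (h : Fresh w t) :
    firstsL w (t+1) = firstsL w t ++ [w (t+1)] := by
  rw [firstsL_succ_eq, if_neg]
  rw [mem_firstsL_iff]
  rintro ⟨s, hs, hw⟩
  exact h s hs hw

lemma firstsL_succ_of_not_fresh (t : ℕ) (h : ¬ Fresh w t) :
    firstsL w (t+1) = firstsL w t := by
  rw [firstsL_succ_eq, if_pos]
  rw [mem_firstsL_iff]
  unfold Fresh at h
  push_neg at h
  rcases h with ⟨s, hs, hw⟩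
  exact ⟨s, hs, hw⟩

/-- congruence: all state at time `t` only depends on `w` on `[0,t]` -/
lemma cnt_congr (w' : ℕ → Fin N) (t : ℕ) (h : ∀ s ≤ t, w s = w' s) (e : Fin N × Fin N) :
    cnt w t e = cnt w' t e := by
  unfold cnt
  congr 1
  apply Finset.filter_congr
  intro s hs
  simp only [Finset.mem_range] at hs
  rw [h s (by omega), h (s+1) (by omega)]

lemma OutF_congr (w' : ℕ → Fin N) (t : ℕ) (h : ∀ s ≤ t, w s = w' s) (u : Fin N) :
    OutF w t u = OutF w' t u := by
  unfold OutF
  apply Finset.filter_congr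
  intro x _
  rw [cnt_congr w w' t h]

lemma firstsL_congr (w' : ℕ → Fin N) (t : ℕ) (h : ∀ s ≤ t, w s = w' s) :
    firstsL w t = firstsL w' t := by
  induction t with
  | zero => simp [firstsL, h 0 (le_refl 0)]
  | succ t ih =>
    have ih' := ih (fun s hs => h s (by omega))
    rw [firstsL_succ_eq, firstsL_succ_eq, ih', h (t+1) (le_refl _)]

/-! ### Global parity potential -/

/-- the set of open edges at time `t` -/
def OpenE (t : ℕ) : Finset (Fin N × Fin N) :=
  Finset.univ.filter (fun e => Odd (cnt w t e))

lemma OutF_succ_ne (t : ℕ) (u : Fin N) (hu : u ≠ w t) : OutF w (t+1) u = OutF w t u := by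
  ext x
  have hc : (w t, w (t+1)) ≠ (u, x) := fun he => hu (congrArg Prod.fst he).symm
  rw [mem_OutF_iff, mem_OutF_iff, cnt_succ, if_neg hc, Nat.add_zero]

lemma opening_not_mem (t : ℕ) (h : Opening w t) : w (t+1) ∉ OutF w t (w t) := by
  rw [mem_OutF_iff]
  exact fun ho => (Nat.not_odd_iff_even.2 h) ho

lemma OutF_succ_self_opening (t : ℕ) (h : Opening w t) :
    OutF w (t+1) (w t) = insert (w (t+1)) (OutF w t (w t)) := by
  ext x
  by_cases hx : x = w (t+1)
  · subst hx
    rw [mem_OutF_iff, cnt_succ, if_pos rfl, Nat.odd_add_one, Nat.not_odd_iff_even]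
    simp only [Finset.mem_insert_self, iff_true]
    exact h
  · have hc : (w t, w (t+1)) ≠ (w t, x) := fun he => hx ((congrArg Prod.snd he).symm)
    rw [mem_OutF_iff, cnt_succ, if_neg hc, Nat.add_zero, Finset.mem_insert, ← mem_OutF_iff]
    simp [hx]

lemma OutF_succ_self_closing (t : ℕ) (h : ¬ Opening w t) :
    OutF w (t+1) (w t) = (OutF w t (w t)).erase (w (t+1)) := by
  ext x
  by_cases hx : x = w (t+1)
  · subst hx
    have hodd : Odd (cnt w t (w t, w (t+1))) := (mem_OutF_iff w t (w t) (w (t+1))).1 (not_opening_mem w t h)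
    rw [mem_OutF_iff, cnt_succ, if_pos rfl, Nat.odd_add_one, Nat.not_odd_iff_even]
    simp only [Finset.mem_erase, ne_eq, not_true_eq_false, false_and, iff_false]
    exact fun he => (Nat.not_odd_iff_even.2 he) hodd
  · have hc : (w t, w (t+1)) ≠ (w t, x) := fun he => hx ((congrArg Prod.snd he).symm)
    rw [mem_OutF_iff, cnt_succ, if_neg hc, Nat.add_zero, Finset.mem_erase, ← mem_OutF_iff]
    simp [hx]

/-- the "surplus" potential -/
def Psi (t : ℕ) : ℕ := ∑ u : Fin N, ((OutF w t u).card - 1)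

lemma Psi_succ (t : ℕ) :
    Psi w (t+1) + ((OutF w t (w t)).card - 1) = Psi w t + ((OutF w (t+1) (w t)).card - 1) := by
  have h1 : Psi w t
      = (∑ u ∈ Finset.univ.erase (w t), ((OutF w t u).card - 1)) + ((OutF w t (w t)).card - 1) :=
    (Finset.sum_erase_add Finset.univ (fun u => (OutF w t u).card - 1) (Finset.mem_univ (w t))).symm
  have h2 : Psi w (t+1)
      = (∑ u ∈ Finset.univ.erase (w t), ((OutF w (t+1) u).card - 1)) + ((OutF w (t+1) (w t)).card - 1) :=
    (Finset.sum_erase_add Finset.univ (fun u => (OutF w (t+1) u).card - 1) (Finset.mem_univ (w t))).symm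
  have h3 : (∑ u ∈ Finset.univ.erase (w t), ((OutF w (t+1) u).card - 1))
      = ∑ u ∈ Finset.univ.erase (w t), ((OutF w t u).card - 1) :=
    Finset.sum_congr rfl (fun u hu => by rw [OutF_succ_ne w t u (Finset.mem_erase.1 hu).1])
  rw [h1, h2, h3]
  ring

lemma card_OutF_succ_opening (t : ℕ) (h : Opening w t) :
    (OutF w (t+1) (w t)).card = (OutF w t (w t)).card + 1 := by
  rw [OutF_succ_self_opening w t h, Finset.card_insert_of_notMem (opening_not_mem w t h)]

lemma card_OutF_succ_closing (t : ℕ) (h : ¬ Opening w t) :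
    (OutF w t (w t)).card = (OutF w (t+1) (w t)).card + 1 := by
  rw [OutF_succ_self_closing w t h, Finset.card_erase_of_mem (not_opening_mem w t h)]
  have := not_opening_lvl w t h
  unfold lvl at this
  omega

/-! ### Counting openings -/

def Phi (t : ℕ) : ℕ := (OpenE w t).card

lemma mem_OpenE_iff (t : ℕ) (e : Fin N × Fin N) : e ∈ OpenE w t ↔ Odd (cnt w t e) := by
  simp [OpenE]

lemma OpenE_succ_opening (t : ℕ) (h : Opening w t) :
    OpenE w (t+1) = insert (w t, w (t+1)) (OpenE w t) := by
  ext e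
  by_cases he : e = (w t, w (t+1))
  · subst he
    rw [mem_OpenE_iff, cnt_succ, if_pos rfl, Nat.odd_add_one, Nat.not_odd_iff_even]
    simp only [Finset.mem_insert_self, iff_true]
    exact h
  · have hc : (w t, w (t+1)) ≠ e := fun hc => he hc.symm
    rw [mem_OpenE_iff, cnt_succ, if_neg hc, Nat.add_zero, Finset.mem_insert, ← mem_OpenE_iff]
    simp [fun hx => he hx]

lemma OpenE_succ_closing (t : ℕ) (h : ¬ Opening w t) :
    OpenE w (t+1) = (OpenE w t).erase (w t, w (t+1)) := by
  ext e
  by_cases he : e = (w t, w (t+1))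
  · subst he
    have hodd : Odd (cnt w t (w t, w (t+1))) := Nat.not_even_iff_odd.1 h
    rw [mem_OpenE_iff, cnt_succ, if_pos rfl, Nat.odd_add_one, Nat.not_odd_iff_even]
    simp only [Finset.mem_erase, ne_eq, not_true_eq_false, false_and, iff_false]
    exact fun he2 => (Nat.not_odd_iff_even.2 he2) hodd
  · have hc : (w t, w (t+1)) ≠ e := fun hc => he hc.symm
    rw [mem_OpenE_iff, cnt_succ, if_neg hc, Nat.add_zero, Finset.mem_erase, ← mem_OpenE_iff]
    simp [he]

lemma mem_OpenE_self (t : ℕ) (h : ¬ Opening w t) : (w t, w (t+1)) ∈ OpenE w t := by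
  rw [mem_OpenE_iff]
  exact Nat.not_even_iff_odd.1 h

lemma Phi_succ_opening (t : ℕ) (h : Opening w t) : Phi w (t+1) = Phi w t + 1 := by
  unfold Phi
  rw [OpenE_succ_opening w t h, Finset.card_insert_of_notMem]
  rw [mem_OpenE_iff]
  exact fun ho => (Nat.not_odd_iff_even.2 h) ho

lemma Phi_succ_closing (t : ℕ) (h : ¬ Opening w t) : Phi w t = Phi w (t+1) + 1 := by
  unfold Phi
  rw [OpenE_succ_closing w t h, Finset.card_erase_of_mem (mem_OpenE_self w t h)]
  have : 0 < (OpenE w t).card := Finset.card_pos.2 ⟨_, mem_OpenE_self w t h⟩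
  omega

section CountingHelpers

variable (p : ℕ → Prop) [DecidablePred p]

lemma filter_range_succ_card (T : ℕ) :
    ((Finset.range (T+1)).filter p).card
      = ((Finset.range T).filter p).card + if p T then 1 else 0 := by
  rw [Finset.range_add_one, Finset.filter_insert]
  split
  · rw [Finset.card_insert_of_notMem (by simp)]
  · rfl

end CountingHelpers

open Classical in
lemma phi_balance (T : ℕ) :
    Phi w T + ((Finset.range T).filter (fun s => ¬ Opening w s)).card
      = ((Finset.range T).filter (fun s => Opening w s)).card := by
  induction T with
  | zero => simp [Phi, OpenE, cnt_zero]
  | succ T ih =>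
    rw [filter_range_succ_card, filter_range_succ_card]
    by_cases h : Opening w T
    · rw [if_pos h, if_neg (by simpa using h)]
      have := Phi_succ_opening w T h
      omega
    · rw [if_neg h, if_pos h]
      have := Phi_succ_closing w T h
      omega

open Classical in
lemma psi_balance (T : ℕ) :
    Psi w T + ((Finset.range T).filter (fun s => ¬ Opening w s ∧ 2 ≤ lvl w s)).card
      = ((Finset.range T).filter (fun s => Opening w s ∧ 1 ≤ lvl w s)).card := by
  induction T with
  | zero => simp [Psi, OutF, cnt_zero]
  | succ T ih =>
    rw [filter_range_succ_card, filter_range_succ_card]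
    have hps := Psi_succ w T
    have hlvl : lvl w T = (OutF w T (w T)).card := rfl
    by_cases h : Opening w T
    · have hcard := card_OutF_succ_opening w T h
      by_cases hl : 1 ≤ lvl w T
      · rw [if_neg (fun hc => hc.1 h), if_pos ⟨h, hl⟩]
        omega
      · rw [if_neg (fun hc => hc.1 h), if_neg (fun hc => hl hc.2)]
        omega
    · have hcard := card_OutF_succ_closing w T h
      have hl1 := not_opening_lvl w T h
      by_cases hl : 2 ≤ lvl w T
      · rw [if_pos ⟨h, hl⟩, if_neg (fun hc => h hc.1)]
        omega
      · rw [if_neg (fun hc => hl hc.2), if_neg (fun hc => h hc.1)]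
        omega
/-! ### End-state lemmas -/

/-- the set of visited vertices -/
def visited (K : ℕ) : Finset (Fin N) := (Finset.range (K+1)).image w

section Ends

variable {K : ℕ} (hE : ∀ e, Even (cnt w K e))
include hE

lemma OutF_end_empty (u : Fin N) : OutF w K u = ∅ := by
  apply Finset.eq_empty_iff_forall_notMem.2
  intro x hx
  exact (Nat.not_odd_iff_even.2 (hE _)) ((mem_OutF_iff w K u x).1 hx)

lemma Psi_end : Psi w K = 0 := by
  unfold Psi
  apply Finset.sum_eq_zero
  intro u _
  rw [OutF_end_empty w hE u]
  rfl

lemma Phi_end : Phi w K = 0 := by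
  unfold Phi
  rw [Finset.card_eq_zero, Finset.eq_empty_iff_forall_notMem]
  intro e he
  exact (Nat.not_odd_iff_even.2 (hE _)) ((mem_OpenE_iff w K e).1 he)

lemma count_openings (k : ℕ) (hK : K = 2*k) :
    ((Finset.range K).filter (fun s => Opening w s)).card = k := by
  have h1 := phi_balance w K
  have h2 := Phi_end w hE
  have h3 : ((Finset.range K).filter (fun s => Opening w s)).card
      + ((Finset.range K).filter (fun s => ¬ Opening w s)).card = K := by
    rw [Finset.card_filter_add_card_filter_not, Finset.card_range]
  omega

lemma count_D3_eq_U :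
    ((Finset.range K).filter (fun s => ¬ Opening w s ∧ 2 ≤ lvl w s)).card
      = ((Finset.range K).filter (fun s => Opening w s ∧ 1 ≤ lvl w s)).card := by
  have h1 := psi_balance w K
  have h2 := Psi_end w hE
  omega

end Ends

lemma fresh_opening (t : ℕ) (h : Fresh w t) : Opening w t := by
  by_contra ho
  have : 0 < cnt w t (w t, w (t+1)) := by
    rcases Nat.not_even_iff_odd.1 ho with ⟨m, hm⟩
    omega
  rcases (cnt_pos_iff w t _).1 this with ⟨s, hs, he⟩
  exact h (s+1) (by omega) (congrArg Prod.snd he)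

lemma mem_visited (K : ℕ) (x : Fin N) : x ∈ visited w K ↔ ∃ s ≤ K, w s = x := by
  unfold visited
  simp only [Finset.mem_image, Finset.mem_range]
  constructor
  · rintro ⟨s, hs, rfl⟩; exact ⟨s, by omega, rfl⟩
  · rintro ⟨s, hs, rfl⟩; exact ⟨s, by omega, rfl⟩

lemma count_fresh (K : ℕ) :
    ((Finset.range K).filter (fun t => Fresh w t)).card + 1 = (visited w K).card := by
  have himg : ((Finset.range K).filter (fun t => Fresh w t)).image (fun t => w (t+1))
      = (visited w K).erase (w 0) := by
    ext v
    simp only [Finset.mem_image, Finset.mem_filter, Finset.mem_range, Finset.mem_erase]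
    constructor
    · rintro ⟨t, ⟨ht, hf⟩, rfl⟩
      refine ⟨fun h0 => hf 0 (Nat.zero_le t) h0.symm, (mem_visited w K _).2 ⟨t+1, by omega, rfl⟩⟩
    · rintro ⟨hv0, hv⟩
      rcases (mem_visited w K v).1 hv with ⟨s, hs, rfl⟩
      have hne : {n : ℕ | w n = w s}.Nonempty := ⟨s, rfl⟩
      set t0 := sInf {n : ℕ | w n = w s} with ht0
      have ht0mem : w t0 = w s := Nat.sInf_mem hne
      have ht0le : t0 ≤ s := Nat.sInf_le rfl
      have ht0pos : t0 ≠ 0 := by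
        intro h0
        exact hv0 (by rw [← ht0mem, h0])
      refine ⟨t0 - 1, ⟨by omega, ?_⟩, by rw [show t0 - 1 + 1 = t0 by omega]; exact ht0mem⟩
      intro s' hs' he
      have : t0 ≤ s' := Nat.sInf_le (by rw [Set.mem_setOf_eq, he, show t0 - 1 + 1 = t0 by omega]; exact ht0mem)
      omega
  have hinj : Set.InjOn (fun t => w (t+1)) ↑((Finset.range K).filter (fun t => Fresh w t)) := by
    intro t1 h1 t2 h2 he
    simp only [Finset.coe_filter, Set.mem_setOf_eq, Finset.mem_range] at h1 h2
    by_contra hne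
    rcases Nat.lt_or_ge t1 t2 with hlt | hge
    · exact h2.2 (t1+1) (by omega) he
    · exact h1.2 (t2+1) (by omega) he.symm
  have hc := Finset.card_image_of_injOn hinj
  rw [himg, Finset.card_erase_of_mem ((mem_visited w K (w 0)).2 ⟨0, Nat.zero_le K, rfl⟩)] at hc
  have : 0 < (visited w K).card :=
    Finset.card_pos.2 ⟨w 0, (mem_visited w K (w 0)).2 ⟨0, Nat.zero_le K, rfl⟩⟩
  omega

lemma count_lvl0 (K : ℕ) (hcl : w K = w 0) (hK0 : 0 < K) :
    (visited w K).card
      ≤ ((Finset.range K).filter (fun t => Opening w t ∧ lvl w t = 0)).card := by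
  apply Finset.card_le_card_of_injOn (fun v => sInf {n : ℕ | w n = v})
  · intro v hv
    rcases (mem_visited w K v).1 hv with ⟨s, hs, rfl⟩
    have hne : {n : ℕ | w n = w s}.Nonempty := ⟨s, rfl⟩
    set t0 := sInf {n : ℕ | w n = w s} with ht0
    have ht0mem : w t0 = w s := Nat.sInf_mem hne
    have hocc : ∃ s' < K, w s' = w s := by
      rcases Nat.lt_or_ge s K with h | h
      · exact ⟨s, h, rfl⟩
      · have : s = K := by omega
        exact ⟨0, hK0, by rw [← hcl, this]⟩
    rcases hocc with ⟨s', hs', hws'⟩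
    have ht0lt : t0 < K := lt_of_le_of_lt (Nat.sInf_le hws') hs'
    have hmin : ∀ s'' < t0, w s'' ≠ w s := fun s'' h2 he => by
      have := Nat.sInf_le (show s'' ∈ {n : ℕ | w n = w s} from he)
      omega
    have hnocc : ∀ e, w t0 = e.1 → cnt w t0 e = 0 := by
      intro e he1
      by_contra hc
      rcases (cnt_pos_iff w t0 e).1 (Nat.pos_of_ne_zero hc) with ⟨s'', hs'', he⟩
      have h1 : w s'' = e.1 := by rw [← he]
      exact hmin s'' hs'' (by rw [h1, ← he1, ht0mem])
    simp only [Finset.mem_coe, Finset.mem_filter, Finset.mem_range]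
    refine ⟨ht0lt, ?_, ?_⟩
    · unfold Opening
      rw [hnocc (w t0, w (t0+1)) rfl]
      exact Even.zero
    · unfold lvl
      rw [Finset.card_eq_zero, Finset.eq_empty_iff_forall_notMem]
      intro x hx
      have := (mem_OutF_iff w t0 (w t0) x).1 hx
      rw [hnocc (w t0, x) rfl] at this
      simp at this
  · intro v1 hv1 v2 hv2 he
    have h1 : w (sInf {n : ℕ | w n = v1}) = v1 := by
      rcases (mem_visited w K v1).1 hv1 with ⟨s, _, hws⟩
      exact Nat.sInf_mem (⟨s, hws⟩ : ({n : ℕ | w n = v1}).Nonempty)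
    have h2 : w (sInf {n : ℕ | w n = v2}) = v2 := by
      rcases (mem_visited w K v2).1 hv2 with ⟨s, _, hws⟩
      exact Nat.sInf_mem (⟨s, hws⟩ : ({n : ℕ | w n = v2}).Nonempty)
    have he' : sInf {n : ℕ | w n = v1} = sInf {n : ℕ | w n = v2} := he
    rw [← h1, ← h2, he']

/-- The main special-legs counting bound. -/
lemma special_count (K k ℓ : ℕ) (hK : K = 2*k) (hE : ∀ e, Even (cnt w K e))
    (hcl : w K = w 0) (hv : (visited w K).card = ℓ) (hk : 0 < k) (hlk : ℓ ≤ k) :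
    ((Finset.range K).filter (fun t => Special w t)).card ≤ 3*(k-ℓ)+1 := by
  have hopen := count_openings w hE k hK
  have hfresh := count_fresh w K
  rw [hv] at hfresh
  have hD3U := count_D3_eq_U w hE
  have hlvl0 := count_lvl0 w K hcl (by omega)
  rw [hv] at hlvl0
  -- split the openings by freshness
  have hsplit1 : ((Finset.range K).filter (fun s => Opening w s ∧ Fresh w s)).card
      + ((Finset.range K).filter (fun s => Opening w s ∧ ¬ Fresh w s)).card
      = ((Finset.range K).filter (fun s => Opening w s)).card := by
    rw [← Finset.filter_filter, ← Finset.filter_filter,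
      Finset.card_filter_add_card_filter_not]
  have hof : ((Finset.range K).filter (fun s => Opening w s ∧ Fresh w s))
      = ((Finset.range K).filter (fun s => Fresh w s)) := by
    apply Finset.filter_congr
    intro t _
    exact ⟨fun h => h.2, fun h => ⟨fresh_opening w t h, h⟩⟩
  rw [hof] at hsplit1
  -- split the openings by level
  have hsplit2 : ((Finset.range K).filter (fun s => Opening w s ∧ lvl w s = 0)).card
      + ((Finset.range K).filter (fun s => Opening w s ∧ ¬ lvl w s = 0)).card
      = ((Finset.range K).filter (fun s => Opening w s)).card := by
    rw [← Finset.filter_filter, ← Finset.filter_filter,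
      Finset.card_filter_add_card_filter_not]
  have hU : ((Finset.range K).filter (fun s => Opening w s ∧ ¬ lvl w s = 0))
      = ((Finset.range K).filter (fun s => Opening w s ∧ 1 ≤ lvl w s)) := by
    apply Finset.filter_congr
    intro t _
    constructor
    · rintro ⟨h1, h2⟩; exact ⟨h1, by omega⟩
    · rintro ⟨h1, h2⟩; exact ⟨h1, by omega⟩
  rw [hU] at hsplit2
  -- specials are covered by the three classes
  have hsub : ((Finset.range K).filter (fun t => Special w t))
      ⊆ ((Finset.range K).filter (fun s => Opening w s ∧ ¬ Fresh w s))
        ∪ ((Finset.range K).filter (fun s => Opening w s ∧ 1 ≤ lvl w s))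
        ∪ ((Finset.range K).filter (fun s => ¬ Opening w s ∧ 2 ≤ lvl w s)) := by
    intro t ht
    simp only [Finset.mem_filter, Finset.mem_union] at *
    rcases ht with ⟨htr, h | h | h⟩
    · exact Or.inl (Or.inl ⟨htr, h⟩)
    · exact Or.inl (Or.inr ⟨htr, h⟩)
    · exact Or.inr ⟨htr, h⟩
  have hcard := Finset.card_le_card hsub
  have hcard2 := Finset.card_union_le
    (((Finset.range K).filter (fun s => Opening w s ∧ ¬ Fresh w s))
      ∪ ((Finset.range K).filter (fun s => Opening w s ∧ 1 ≤ lvl w s)))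
    ((Finset.range K).filter (fun s => ¬ Opening w s ∧ 2 ≤ lvl w s))
  have hcard3 := Finset.card_union_le
    ((Finset.range K).filter (fun s => Opening w s ∧ ¬ Fresh w s))
    ((Finset.range K).filter (fun s => Opening w s ∧ 1 ≤ lvl w s))
  omega

/-! ### Structure lemmas for decoding -/

lemma no_prior_cnt (t : ℕ) (hpr : ∀ s < t, w s ≠ w t) :
    ∀ e : Fin N × Fin N, e.1 = w t → cnt w t e = 0 := by
  intro e he1
  by_contra hc
  rcases (cnt_pos_iff w t e).1 (Nat.pos_of_ne_zero hc) with ⟨s, hs, he⟩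
  have h1 : w s = e.1 := by rw [← he]
  exact hpr s hs (by rw [h1, he1])

lemma opening_of_no_prior (t : ℕ) (hpr : ∀ s < t, w s ≠ w t) : Opening w t := by
  unfold Opening
  rw [no_prior_cnt w t hpr (w t, w (t+1)) rfl]
  exact Even.zero

lemma lvl_zero_of_no_prior (t : ℕ) (hpr : ∀ s < t, w s ≠ w t) : lvl w t = 0 := by
  unfold lvl
  rw [Finset.card_eq_zero, Finset.eq_empty_iff_forall_notMem]
  intro x hx
  have := (mem_OutF_iff w t (w t) x).1 hx
  rw [no_prior_cnt w t hpr (w t, x) rfl] at this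
  simp at this

lemma inj_prefix_of_nonspecial (T : ℕ) (h : ∀ s < T, ¬ Special w s) :
    ∀ s1 s2, s1 < s2 → s2 ≤ T → w s1 ≠ w s2 := by
  induction T with
  | zero => intro s1 s2 h1 h2; omega
  | succ T ih =>
    have ih' := ih (fun s hs => h s (by omega))
    intro s1 s2 hlt hle
    rcases Nat.lt_or_ge s2 (T+1) with h2 | h2
    · exact ih' s1 s2 hlt (by omega)
    · have hs2 : s2 = T + 1 := by omega
      subst hs2
      have hpr : ∀ s < T, w s ≠ w T := fun s hs => ih' s T hs (le_refl T)
      have hop := opening_of_no_prior w T hpr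
      have hfresh : Fresh w T := by
        by_contra hf
        exact h T (by omega) (Or.inl ⟨hop, hf⟩)
      exact hfresh s1 (by omega)

lemma length_firstsL_eq (t : ℕ) : (firstsL w t).length = (visited w t).card := by
  have h1 : (firstsL w t).toFinset = visited w t := by
    ext x
    rw [List.mem_toFinset, mem_firstsL_iff, mem_visited]
  rw [← h1, List.toFinset_card_of_nodup (nodup_firstsL w t)]

lemma not_fresh_mem (t : ℕ) (h : ¬ Fresh w t) : w (t+1) ∈ firstsL w t := by
  rw [mem_firstsL_iff]
  unfold Fresh at h
  push_neg at h
  exact h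

lemma getD_indexOf' {α : Type*} [DecidableEq α] (l : List α) (a : α) (ha : a ∈ l) (d : α) :
    l.getD (l.idxOf a) d = a := by
  rw [List.getD_eq_getElem l d (List.idxOf_lt_length_of_mem ha)]
  exact List.getElem_idxOf _

lemma fresh_decode (t T : ℕ) (hf : Fresh w t) (hT : t + 1 ≤ T) (d : Fin N) :
    (firstsL w T).getD (firstsL w t).length d = w (t+1) := by
  have hpre : firstsL w (t+1) <+: firstsL w T := firstsL_prefix w (t+1) T hT
  have heq := firstsL_succ_of_fresh w t hf
  have hlen : (firstsL w t).length < (firstsL w (t+1)).length := by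
    rw [heq]; simp
  have hlen2 : (firstsL w t).length < (firstsL w T).length :=
    lt_of_lt_of_le hlen hpre.length_le
  rw [List.getD_eq_getElem _ _ hlen2, ← hpre.getElem hlen]
  simp only [heq]
  exact List.getElem_concat_length rfl _

/-! ### The list of special legs and encoding -/

/-- the list of special leg positions, in increasing order -/
def specs (K : ℕ) : List ℕ := (List.range K).filter (fun t => decide (Special w t))

lemma mem_specs_iff (K t : ℕ) : t ∈ specs w K ↔ t < K ∧ Special w t := by
  unfold specs
  rw [List.mem_filter, List.mem_range, decide_eq_true_eq]

lemma specs_sorted (K : ℕ) : List.Pairwise (· < ·) (specs w K) :=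
  List.Pairwise.filter _ (List.pairwise_lt_range)

lemma firstsL_getD_zero (T : ℕ) (d : Fin N) : (firstsL w T).getD 0 d = w 0 := by
  have hpre : firstsL w 0 <+: firstsL w T := firstsL_prefix w 0 T (Nat.zero_le T)
  have h0 : (0:ℕ) < (firstsL w 0).length := by simp [firstsL]
  rw [List.getD_eq_getElem _ _ (lt_of_lt_of_le h0 hpre.length_le), ← hpre.getElem h0]
  simp [firstsL]

lemma length_filter_range (p : ℕ → Prop) [DecidablePred p] (K : ℕ) :
    ((List.range K).filter (fun t => decide (p t))).length
      = ((Finset.range K).filter p).card := by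
  induction K with
  | zero => simp
  | succ K ih =>
    rw [List.range_succ, List.filter_append, List.length_append, filter_range_succ_card p K, ih]
    simp only [List.filter_cons, List.filter_nil]
    split
    · simp only [List.length_cons, List.length_nil]
      rw [if_pos (by rename_i h; exact of_decide_eq_true h)]
    · simp only [List.length_nil]
      rw [if_neg (by rename_i h; simpa using h)]

lemma length_specs_le (K k ℓ : ℕ) (hK : K = 2*k) (hE : ∀ e, Even (cnt w K e))
    (hcl : w K = w 0) (hv : (visited w K).card = ℓ) (hk : 0 < k) (hlk : ℓ ≤ k) :
    (specs w K).length ≤ 3*(k-ℓ)+1 := by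
  unfold specs
  rw [length_filter_range]
  exact special_count w K k ℓ hK hE hcl hv hk hlk

lemma exists_special (K k ℓ : ℕ) (hK : K = 2*k) (hE : ∀ e, Even (cnt w K e))
    (hv : (visited w K).card = ℓ) (hlk : ℓ ≤ k) :
    ∃ t < K, Special w t := by
  have hopen := count_openings w hE k hK
  have hfresh := count_fresh w K
  rw [hv] at hfresh
  have hsplit1 : ((Finset.range K).filter (fun s => Opening w s ∧ Fresh w s)).card
      + ((Finset.range K).filter (fun s => Opening w s ∧ ¬ Fresh w s)).card
      = ((Finset.range K).filter (fun s => Opening w s)).card := by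
    rw [← Finset.filter_filter, ← Finset.filter_filter,
      Finset.card_filter_add_card_filter_not]
  have hof : ((Finset.range K).filter (fun s => Opening w s ∧ Fresh w s))
      = ((Finset.range K).filter (fun s => Fresh w s)) := by
    apply Finset.filter_congr
    intro t _
    exact ⟨fun h => h.2, fun h => ⟨fresh_opening w t h, h⟩⟩
  rw [hof] at hsplit1
  have hpos : 0 < ((Finset.range K).filter (fun s => Opening w s ∧ ¬ Fresh w s)).card := by
    omega
  rcases Finset.card_pos.1 hpos with ⟨t, ht⟩
  simp only [Finset.mem_filter, Finset.mem_range] at ht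
  exact ⟨t, ht.1, Or.inl ht.2⟩

lemma first_special_facts (K ℓ t0 : ℕ) (hv : (visited w K).card = ℓ) (ht0K : t0 < K)
    (hsp : Special w t0) (hmin : ∀ s < t0, ¬ Special w s) :
    ¬ Fresh w t0 ∧ (firstsL w t0).length = t0 + 1 ∧ t0 < ℓ := by
  have hinj := inj_prefix_of_nonspecial w t0 hmin
  have hpr : ∀ s < t0, w s ≠ w t0 := fun s hs => hinj s t0 hs le_rfl
  have hop := opening_of_no_prior w t0 hpr
  have hlvl0 := lvl_zero_of_no_prior w t0 hpr
  have hnf : ¬ Fresh w t0 := by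
    rcases hsp with h | h | h
    · exact h.2
    · omega
    · exact absurd hop h.1
  have hlen : (firstsL w t0).length = t0 + 1 := by
    rw [length_firstsL_eq]
    unfold visited
    rw [Finset.card_image_of_injOn, Finset.card_range]
    intro s1 h1 s2 h2 he
    simp only [Finset.coe_range, Set.mem_Iio] at h1 h2
    by_contra hne
    rcases Nat.lt_or_ge s1 s2 with h | h
    · exact hinj s1 s2 h (by omega) he
    · exact hinj s2 s1 (by omega) (by omega) he.symm
  have hmono : (firstsL w t0).length ≤ (firstsL w K).length :=
    (firstsL_prefix w t0 K (by omega)).length_le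
  rw [length_firstsL_eq w K, hv] at hmono
  exact ⟨hnf, hlen, by omega⟩

/-- the parameter recorded for a special leg -/
def paramOf (t : ℕ) : ℕ :=
  if Fresh w t then 0 else 1 + (firstsL w t).idxOf (w (t+1))

lemma paramOf_lt (K ℓ t : ℕ) (hv : (visited w K).card = ℓ) (ht : t ≤ K) (hnf : ¬ Fresh w t) :
    paramOf w t < ℓ + 1 := by
  unfold paramOf
  rw [if_neg hnf]
  have h1 : (firstsL w t).idxOf (w (t+1)) < (firstsL w t).length :=
    List.idxOf_lt_length_of_mem (not_fresh_mem w t hnf)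
  have h2 : (firstsL w t).length ≤ (firstsL w K).length :=
    (firstsL_prefix w t K ht).length_le
  rw [length_firstsL_eq w K, hv] at h2
  omega

/-! ### The encoder -/

/-- entry recorded for a special leg -/
def entryOfF (k : ℕ) (hk : 0 < k) (t : ℕ) : Fin (2*k) × Fin (k+1) :=
  (⟨t % (2*k), Nat.mod_lt _ (by omega)⟩, ⟨paramOf w t % (k+1), Nat.mod_lt _ (by omega)⟩)

/-- position of the first special leg -/
def theT0 (K : ℕ) : ℕ := ((specs w K).head?).getD 0

def encFirst (k : ℕ) (hk : 0 < k) : Fin k × Fin k :=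
  (⟨theT0 w (2*k) % k, Nat.mod_lt _ hk⟩,
   ⟨((firstsL w (theT0 w (2*k))).idxOf (w (theT0 w (2*k) + 1))) % k, Nat.mod_lt _ hk⟩)

def encRest (k ℓ : ℕ) (hk : 0 < k) : Fin (3*(k-ℓ)) → Option (Fin (2*k) × Fin (k+1)) :=
  fun i => ((specs w (2*k)).tail.map (entryOfF w k hk))[(i : ℕ)]?

def encVals (k ℓ : ℕ) : Fin ℓ → Fin N := fun i => (firstsL w (2*k)).getD i (w 0)

/-! ### Decoding steps -/

lemma fresh_step_eq (w1 w2 : ℕ → Fin N) (k ℓ t : ℕ) (ht : t < 2*k)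
    (hv1 : (visited w1 (2*k)).card = ℓ)
    (hvals : encVals w1 k ℓ = encVals w2 k ℓ)
    (hfir : firstsL w1 t = firstsL w2 t)
    (hf1 : Fresh w1 t) (hf2 : Fresh w2 t) : w1 (t+1) = w2 (t+1) := by
  have hgrow := firstsL_succ_of_fresh w1 t hf1
  have hn : (firstsL w1 t).length < ℓ := by
    have hm : (firstsL w1 (t+1)).length ≤ (firstsL w1 (2*k)).length :=
      (firstsL_prefix w1 (t+1) (2*k) (by omega)).length_le
    rw [length_firstsL_eq w1 (2*k), hv1, hgrow, List.length_append] at hm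
    simp at hm
    omega
  have h1 : w1 (t+1) = encVals w1 k ℓ ⟨(firstsL w1 t).length, hn⟩ :=
    (fresh_decode w1 t (2*k) hf1 (by omega) (w1 0)).symm
  have hL : (firstsL w2 t).length = (firstsL w1 t).length := by rw [hfir]
  have h2 : w2 (t+1) = encVals w2 k ℓ ⟨(firstsL w1 t).length, hn⟩ := by
    have := (fresh_decode w2 t (2*k) hf2 (by omega) (w2 0)).symm
    rw [this]
    unfold encVals
    rw [hL]
  rw [h1, h2, hvals]

lemma old_step_eq (w1 w2 : ℕ → Fin N) (t : ℕ)
    (hfir : firstsL w1 t = firstsL w2 t)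
    (hnf1 : ¬ Fresh w1 t) (hnf2 : ¬ Fresh w2 t)
    (hidx : (firstsL w1 t).idxOf (w1 (t+1)) = (firstsL w2 t).idxOf (w2 (t+1))) :
    w1 (t+1) = w2 (t+1) := by
  have hlt1 := List.idxOf_lt_length_of_mem (not_fresh_mem w1 t hnf1)
  have hlt2 := List.idxOf_lt_length_of_mem (not_fresh_mem w2 t hnf2)
  have h1 : (firstsL w1 t)[(firstsL w1 t).idxOf (w1 (t+1))]? = some (w1 (t+1)) := by
    rw [List.getElem?_eq_getElem hlt1, List.getElem_idxOf]
  have h2 : (firstsL w2 t)[(firstsL w2 t).idxOf (w2 (t+1))]? = some (w2 (t+1))  := by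
    rw [List.getElem?_eq_getElem hlt2, List.getElem_idxOf]
  rw [hidx, hfir] at h1
  rw [h1] at h2
  exact Option.some_injective _ h2

/-! ### The master determinism lemma -/

theorem walk_determined (k ℓ : ℕ) (hk : 0 < k) (hl : 0 < ℓ) (hlk : ℓ ≤ k)
    (w1 w2 : ℕ → Fin N)
    (hE1 : ∀ e, Even (cnt w1 (2*k) e)) (hcl1 : w1 (2*k) = w1 0)
    (hv1 : (visited w1 (2*k)).card = ℓ)
    (hE2 : ∀ e, Even (cnt w2 (2*k) e)) (hcl2 : w2 (2*k) = w2 0)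
    (hv2 : (visited w2 (2*k)).card = ℓ)
    (hfirst : encFirst w1 k hk = encFirst w2 k hk)
    (hrest : encRest w1 k ℓ hk = encRest w2 k ℓ hk)
    (hvals : encVals w1 k ℓ = encVals w2 k ℓ) :
    ∀ s ≤ 2*k, w1 s = w2 s := by
  -- the specials lists are nonempty
  obtain ⟨ts1, hts1K, hts1⟩ := exists_special w1 (2*k) k ℓ rfl hE1 hv1 hlk
  obtain ⟨ts2, hts2K, hts2⟩ := exists_special w2 (2*k) k ℓ rfl hE2 hv2 hlk
  have hne1 : specs w1 (2*k) ≠ [] :=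
    List.ne_nil_of_mem ((mem_specs_iff w1 (2*k) ts1).2 ⟨hts1K, hts1⟩)
  have hne2 : specs w2 (2*k) ≠ [] :=
    List.ne_nil_of_mem ((mem_specs_iff w2 (2*k) ts2).2 ⟨hts2K, hts2⟩)
  have hcons1 : theT0 w1 (2*k) :: (specs w1 (2*k)).tail = specs w1 (2*k) := by
    unfold theT0
    rw [List.head?_eq_head hne1, Option.getD_some]
    exact List.cons_head_tail hne1
  have hcons2 : theT0 w2 (2*k) :: (specs w2 (2*k)).tail = specs w2 (2*k) := by
    unfold theT0
    rw [List.head?_eq_head hne2, Option.getD_some]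
    exact List.cons_head_tail hne2
  have hmem01 : theT0 w1 (2*k) ∈ specs w1 (2*k) := by
    rw [← hcons1]; exact List.mem_cons_self
  have hmem02 : theT0 w2 (2*k) ∈ specs w2 (2*k) := by
    rw [← hcons2]; exact List.mem_cons_self
  obtain ⟨ht01K, hsp01⟩ := (mem_specs_iff w1 (2*k) _).1 hmem01
  obtain ⟨ht02K, hsp02⟩ := (mem_specs_iff w2 (2*k) _).1 hmem02
  have hmin1 : ∀ s < theT0 w1 (2*k), ¬ Special w1 s := by
    intro s hs hspec
    have hmem : s ∈ specs w1 (2*k) := (mem_specs_iff w1 (2*k) s).2 ⟨by omega, hspec⟩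
    rw [← hcons1] at hmem
    rcases List.mem_cons.1 hmem with h | h
    · omega
    · have hpw := specs_sorted w1 (2*k)
      rw [← hcons1] at hpw
      have := (List.pairwise_cons.1 hpw).1 s h
      omega
  have hmin2 : ∀ s < theT0 w2 (2*k), ¬ Special w2 s := by
    intro s hs hspec
    have hmem : s ∈ specs w2 (2*k) := (mem_specs_iff w2 (2*k) s).2 ⟨by omega, hspec⟩
    rw [← hcons2] at hmem
    rcases List.mem_cons.1 hmem with h | h
    · omega
    · have hpw := specs_sorted w2 (2*k)
      rw [← hcons2] at hpw
      have := (List.pairwise_cons.1 hpw).1 s h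
      omega
  obtain ⟨hnf01, hlen01, ht01l⟩ :=
    first_special_facts w1 (2*k) ℓ _ hv1 ht01K hsp01 hmin1
  obtain ⟨hnf02, hlen02, ht02l⟩ :=
    first_special_facts w2 (2*k) ℓ _ hv2 ht02K hsp02 hmin2
  -- decode the first component
  have ht0eq : theT0 w1 (2*k) = theT0 w2 (2*k) := by
    have h := congrArg (fun x => (x.1 : ℕ)) hfirst
    simp only [encFirst] at h
    rwa [Nat.mod_eq_of_lt (by omega), Nat.mod_eq_of_lt (by omega)] at h
  have hidx01lt : (firstsL w1 (theT0 w1 (2*k))).idxOf (w1 (theT0 w1 (2*k) + 1)) < k := by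
    have := List.idxOf_lt_length_of_mem (not_fresh_mem w1 _ hnf01)
    omega
  have hidx02lt : (firstsL w2 (theT0 w2 (2*k))).idxOf (w2 (theT0 w2 (2*k) + 1)) < k := by
    have := List.idxOf_lt_length_of_mem (not_fresh_mem w2 _ hnf02)
    omega
  have hidx0eq : (firstsL w1 (theT0 w1 (2*k))).idxOf (w1 (theT0 w1 (2*k) + 1))
      = (firstsL w2 (theT0 w2 (2*k))).idxOf (w2 (theT0 w2 (2*k) + 1)) := by
    have h := congrArg (fun x => (x.2 : ℕ)) hfirst
    simp only [encFirst] at h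
    rwa [Nat.mod_eq_of_lt hidx01lt, Nat.mod_eq_of_lt hidx02lt] at h
  -- decode the rest component
  have hlent1 : (specs w1 (2*k)).tail.length ≤ 3*(k-ℓ) := by
    have h1 := length_specs_le w1 (2*k) k ℓ rfl hE1 hcl1 hv1 hk hlk
    have h2 : (specs w1 (2*k)).length = (specs w1 (2*k)).tail.length + 1 := by
      rw [← hcons1]; simp
    omega
  have hlent2 : (specs w2 (2*k)).tail.length ≤ 3*(k-ℓ) := by
    have h1 := length_specs_le w2 (2*k) k ℓ rfl hE2 hcl2 hv2 hk hlk
    have h2 : (specs w2 (2*k)).length = (specs w2 (2*k)).tail.length + 1 := by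
      rw [← hcons2]; simp
    omega
  have hmapeq : (specs w1 (2*k)).tail.map (entryOfF w1 k hk)
      = (specs w2 (2*k)).tail.map (entryOfF w2 k hk) := by
    apply List.ext_getElem?
    intro n
    by_cases hn : n < 3*(k-ℓ)
    · exact congrFun hrest ⟨n, hn⟩
    · rw [List.getElem?_eq_none, List.getElem?_eq_none]
      · rw [List.length_map]; omega
      · rw [List.length_map]; omega
  have htails : (specs w1 (2*k)).tail = (specs w2 (2*k)).tail := by
    have h1 : (specs w1 (2*k)).tail.map (fun t => t % (2*k))
        = ((specs w1 (2*k)).tail.map (entryOfF w1 k hk)).map (fun x => (x.1 : ℕ)) := by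
      rw [List.map_map]; rfl
    have h2 : (specs w2 (2*k)).tail.map (fun t => t % (2*k))
        = ((specs w2 (2*k)).tail.map (entryOfF w2 k hk)).map (fun x => (x.1 : ℕ)) := by
      rw [List.map_map]; rfl
    have h3 : (specs w1 (2*k)).tail.map (fun t => t % (2*k))
        = (specs w2 (2*k)).tail.map (fun t => t % (2*k)) := by
      rw [h1, hmapeq, ← h2]
    have hid1 : (specs w1 (2*k)).tail.map (fun t => t % (2*k)) = (specs w1 (2*k)).tail := by
      conv_rhs => rw [← List.map_id ((specs w1 (2*k)).tail)]
      apply List.map_congr_left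
      intro t ht
      have := ((mem_specs_iff w1 (2*k) t).1 (List.mem_of_mem_tail ht)).1
      simp [Nat.mod_eq_of_lt this]
    have hid2 : (specs w2 (2*k)).tail.map (fun t => t % (2*k)) = (specs w2 (2*k)).tail := by
      conv_rhs => rw [← List.map_id ((specs w2 (2*k)).tail)]
      apply List.map_congr_left
      intro t ht
      have := ((mem_specs_iff w2 (2*k) t).1 (List.mem_of_mem_tail ht)).1
      simp [Nat.mod_eq_of_lt this]
    rw [← hid1, h3, hid2]
  have hspecseq : specs w1 (2*k) = specs w2 (2*k) := by
    rw [← hcons1, ← hcons2, ht0eq, htails]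
  have hparams : ∀ t ∈ (specs w1 (2*k)).tail, entryOfF w1 k hk t = entryOfF w2 k hk t := by
    have h : (specs w1 (2*k)).tail.map (entryOfF w1 k hk)
        = (specs w1 (2*k)).tail.map (entryOfF w2 k hk) := by
      rw [hmapeq, htails]
    exact List.map_eq_map_iff.1 h
  -- the inductive reconstruction
  have main : ∀ t, t ≤ 2*k → ∀ s ≤ t, w1 s = w2 s := by
    intro t
    induction t with
    | zero =>
      intro _ s hs
      have hs0 : s = 0 := by omega
      subst hs0
      have b1 : w1 0 = encVals w1 k ℓ ⟨0, hl⟩ := (firstsL_getD_zero w1 (2*k) (w1 0)).symm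
      have b2 : w2 0 = encVals w2 k ℓ ⟨0, hl⟩ := (firstsL_getD_zero w2 (2*k) (w2 0)).symm
      rw [b1, b2, hvals]
    | succ t ih =>
      intro ht s hs
      have hist : ∀ s ≤ t, w1 s = w2 s := ih (by omega)
      rcases Nat.lt_or_ge s (t+1) with h | h
      · exact hist s (by omega)
      · have hseq : s = t + 1 := by omega
        subst hseq
        -- the shared state
        have htK : t < 2*k := by omega
        have hfir : firstsL w1 t = firstsL w2 t := firstsL_congr w1 w2 t hist
        have hwt : w1 t = w2 t := hist t le_rfl
        have hOut : OutF w1 t (w1 t) = OutF w2 t (w2 t) := by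
          rw [OutF_congr w1 w2 t hist, hwt]
        have hlvl : lvl w1 t = lvl w2 t := by
          unfold lvl
          rw [hOut]
        by_cases hsp : t ∈ specs w1 (2*k)
        · -- special leg
          rw [← hcons1] at hsp
          rcases List.mem_cons.1 hsp with heq0 | htail
          · -- the first special leg
            have heq02 : t = theT0 w2 (2*k) := by rw [heq0, ht0eq]
            apply old_step_eq w1 w2 t hfir (heq0 ▸ hnf01) (heq02 ▸ hnf02)
            rw [← heq0] at hidx0eq
            rw [← heq02] at hidx0eq
            exact hidx0eq
          · -- a later special leg
            have hpar := congrArg (fun x => (x.2 : ℕ)) (hparams t htail)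
            simp only [entryOfF] at hpar
            have htKs : t ≤ 2*k := by omega
            by_cases hf1 : Fresh w1 t
            · have hp1 : paramOf w1 t = 0 := by unfold paramOf; rw [if_pos hf1]
              have hf2 : Fresh w2 t := by
                by_contra hf2
                have hp2lt := paramOf_lt w2 (2*k) ℓ t hv2 htKs hf2
                rw [hp1, Nat.zero_mod, Nat.mod_eq_of_lt (by omega)] at hpar
                unfold paramOf at hpar
                rw [if_neg hf2] at hpar
                omega
              exact fresh_step_eq w1 w2 k ℓ t htK hv1 hvals hfir hf1 hf2
            · have hf2 : ¬ Fresh w2 t := by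
                intro hf2
                have hp1lt := paramOf_lt w1 (2*k) ℓ t hv1 htKs hf1
                have hp2 : paramOf w2 t = 0 := by unfold paramOf; rw [if_pos hf2]
                rw [hp2, Nat.zero_mod, Nat.mod_eq_of_lt (by omega)] at hpar
                unfold paramOf at hpar
                rw [if_neg hf1] at hpar
                omega
              have hp1lt := paramOf_lt w1 (2*k) ℓ t hv1 htKs hf1
              have hp2lt := paramOf_lt w2 (2*k) ℓ t hv2 htKs hf2
              rw [Nat.mod_eq_of_lt (by omega), Nat.mod_eq_of_lt (by omega)] at hpar
              unfold paramOf at hpar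
              rw [if_neg hf1, if_neg hf2] at hpar
              exact old_step_eq w1 w2 t hfir hf1 hf2 (by omega)
        · -- non-special leg
          have hnsp1 : ¬ Special w1 t := by
            intro hc
            exact hsp ((mem_specs_iff w1 (2*k) t).2 ⟨htK, hc⟩)
          have hnsp2 : ¬ Special w2 t := by
            intro hc
            exact hsp (hspecseq ▸ (mem_specs_iff w2 (2*k) t).2 ⟨htK, hc⟩)
          rcases Nat.eq_zero_or_pos (lvl w1 t) with hlv | hlv
          · -- level 0 : forced fresh
            have hop1 : Opening w1 t := by
              by_contra hop
              have := not_opening_lvl w1 t hop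
              omega
            have hop2 : Opening w2 t := by
              by_contra hop
              have := not_opening_lvl w2 t hop
              omega
            have hf1 : Fresh w1 t := by
              by_contra hf
              exact hnsp1 (Or.inl ⟨hop1, hf⟩)
            have hf2 : Fresh w2 t := by
              by_contra hf
              exact hnsp2 (Or.inl ⟨hop2, hf⟩)
            exact fresh_step_eq w1 w2 k ℓ t htK hv1 hvals hfir hf1 hf2
          · rcases Nat.lt_or_ge (lvl w1 t) 2 with hlv2 | hlv2
            · -- level 1 : forced closing
              have hop1 : ¬ Opening w1 t := by
                intro hop
                exact hnsp1 (Or.inr (Or.inl ⟨hop, hlv⟩))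
              have hop2 : ¬ Opening w2 t := by
                intro hop
                exact hnsp2 (Or.inr (Or.inl ⟨hop, by omega⟩))
              have hm1 := not_opening_mem w1 t hop1
              have hm2 := not_opening_mem w2 t hop2
              have hone : lvl w1 t = 1 := by omega
              unfold lvl at hone
              rcases Finset.card_eq_one.1 hone with ⟨a, ha⟩
              rw [ha, Finset.mem_singleton] at hm1
              rw [← hOut, ha, Finset.mem_singleton] at hm2
              rw [hm1, hm2]
            · -- level ≥ 2 : impossible for a non-special leg
              exfalso
              by_cases hop : Opening w1 t
              · exact hnsp1 (Or.inr (Or.inl ⟨hop, by omega⟩))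
              · exact hnsp1 (Or.inr (Or.inr ⟨hop, hlv2⟩))
  intro s hsK
  exact main (2*k) le_rfl s hsK

/-! ### From lists to walks -/

lemma zip_tail_eq_map (P : List (Fin N)) (K : ℕ) (hlen : P.length = K+1) (d : Fin N) :
    P.zip P.tail = (List.range K).map (fun s => (P.getD s d, P.getD (s+1) d)) := by
  apply List.ext_getElem
  · simp [hlen]
  · intro i h1 h2
    have hi : i < K := by
      simp only [List.length_map, List.length_range] at h2
      exact h2
    simp only [List.getElem_zip, List.getElem_map, List.getElem_range]
    rw [List.getD_eq_getElem _ _ (by omega), List.getD_eq_getElem _ _ (by omega)]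
    simp [List.getElem_tail]

lemma count_map_range {α : Type*} [DecidableEq α] (f : ℕ → α) (e : α) (K : ℕ) :
    ((List.range K).map f).count e = ((Finset.range K).filter (fun s => f s = e)).card := by
  induction K with
  | zero => simp
  | succ K ih =>
    rw [List.range_succ, List.map_append, List.count_append,
      filter_range_succ_card (fun s => f s = e) K, ih]
    by_cases h : f K = e
    · simp [h]
    · rw [if_neg h]
      have : List.count e (List.map f [K]) = 0 := by
        rw [List.count_eq_zero]
        simp [Ne.symm h]
      omega

lemma cnt_eq_count (K : ℕ) (P : List (Fin N)) (hlen : P.length = K+1) (d : Fin N)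
    (e : Fin N × Fin N) :
    cnt (fun i => P.getD i d) K e = (pathEdges P).count e := by
  show cnt (fun i => P.getD i d) K e = Multiset.count e ↑(P.zip P.tail)
  rw [zip_tail_eq_map P K hlen d]
  rw [Multiset.coe_count]
  rw [count_map_range (fun s => (P.getD s d, P.getD (s+1) d)) e K]
  rfl

lemma path_facts (k ℓ : ℕ) (hN : 0 < N) (P : List (Fin N))
    (hlen : P.length = 2*k+1) (hev : IsEvenPath P) (hcard : P.toFinset.card = ℓ) :
    (∀ e, Even (cnt (fun i => P.getD i ⟨0, hN⟩) (2*k) e))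
    ∧ (fun i => P.getD i (⟨0, hN⟩ : Fin N)) (2*k) = (fun i => P.getD i (⟨0, hN⟩ : Fin N)) 0
    ∧ (visited (fun i => P.getD i (⟨0, hN⟩ : Fin N)) (2*k)).card = ℓ := by
  refine ⟨?_, ?_, ?_⟩
  · intro e
    rw [cnt_eq_count (2*k) P hlen ⟨0, hN⟩ e]
    exact hev.2 e
  · have hcl := hev.1.2
    rw [List.head?_eq_getElem?, List.getLast?_eq_getElem?] at hcl
    rw [List.getElem?_eq_getElem (by omega), List.getElem?_eq_getElem (by omega : P.length - 1 < P.length)] at hcl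
    have h2 : P[P.length - 1]'(by omega) = P[2*k]'(by omega) := by
      congr 1
      omega
    rw [h2] at hcl
    have h0 := Option.some_injective _ hcl
    show P.getD (2*k) ⟨0, hN⟩ = P.getD 0 ⟨0, hN⟩
    rw [List.getD_eq_getElem _ _ (by omega), List.getD_eq_getElem _ _ (by omega)]
    exact h0.symm
  · rw [← hcard]
    congr 1
    ext x
    rw [mem_visited, List.mem_toFinset]
    constructor
    · rintro ⟨s, hs, rfl⟩
      show P.getD s ⟨0, hN⟩ ∈ P
      rw [List.getD_eq_getElem _ _ (by omega)]
      exact List.getElem_mem _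
    · intro hx
      rcases List.mem_iff_getElem.1 hx with ⟨i, hi, rfl⟩
      refine ⟨i, by omega, ?_⟩
      show P.getD i ⟨0, hN⟩ = P[i]
      rw [List.getD_eq_getElem _ _ (by omega)]

end EvenPathCount

open EvenPathCount in
/-- For `1 ≤ ℓ ≤ min{k, N}`, the number of even closed paths of length `2k` on `[N]`
visiting exactly `ℓ` distinct vertices is at most `k²·(4k)^{6(k-ℓ)}·N^ℓ`. -/
theorem count_even_closed_paths (N k ℓ : ℕ) (h1 : 1 ≤ ℓ) (hlk : ℓ ≤ k) (hlN : ℓ ≤ N) :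
    {P : List (Fin N) | P.length = 2 * k + 1 ∧ IsEvenPath P ∧ P.toFinset.card = ℓ}.ncard
      ≤ k ^ 2 * (4 * k) ^ (6 * (k - ℓ)) * N ^ ℓ := by
  classical
  have hk : 0 < k := by omega
  have hN : 0 < N := by omega
  have hl : 0 < ℓ := h1
  set S := {P : List (Fin N) | P.length = 2 * k + 1 ∧ IsEvenPath P ∧ P.toFinset.card = ℓ}
    with hS
  let wf : List (Fin N) → ℕ → Fin N := fun P i => P.getD i ⟨0, hN⟩
  let T := (Fin k × Fin k) × (Fin (3*(k-ℓ)) → Option (Fin (2*k) × Fin (k+1))) × (Fin ℓ → Fin N)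
  have hinj : Function.Injective (fun p : S =>
      ((encFirst (wf p.1) k hk, encRest (wf p.1) k ℓ hk, encVals (wf p.1) k ℓ) : T)) := by
    rintro ⟨P1, hP1⟩ ⟨P2, hP2⟩ heq
    obtain ⟨hlen1, hev1, hcard1⟩ := hP1
    obtain ⟨hlen2, hev2, hcard2⟩ := hP2
    simp only [Prod.mk.injEq] at heq
    obtain ⟨he1, he2, he3⟩ := heq
    obtain ⟨hE1, hcl1, hv1⟩ := path_facts k ℓ hN P1 hlen1 hev1 hcard1
    obtain ⟨hE2, hcl2, hv2⟩ := path_facts k ℓ hN P2 hlen2 hev2 hcard2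
    have hws := walk_determined k ℓ hk hl hlk (wf P1) (wf P2)
      hE1 hcl1 hv1 hE2 hcl2 hv2 he1 he2 he3
    apply Subtype.ext
    show P1 = P2
    apply List.ext_getElem (by rw [hlen1, hlen2])
    intro i hi1 hi2
    have hi : i ≤ 2*k := by omega
    have g1 : P1[i] = wf P1 i := (List.getD_eq_getElem _ _ hi1).symm
    have g2 : P2[i] = wf P2 i := (List.getD_eq_getElem _ _ hi2).symm
    rw [g1, g2, hws i hi]
  have hcard : S.ncard ≤ Nat.card T := by
    rw [← Nat.card_coe_set_eq]
    exact Nat.card_le_card_of_injective _ hinj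
  have hcardT : Nat.card T = k * k * ((2*k*(k+1)+1)^(3*(k-ℓ)) * N^ℓ) := by
    rw [Nat.card_eq_fintype_card]
    simp [T, Fintype.card_fun, mul_comm, mul_assoc, mul_left_comm]
  have hbound : k * k * ((2*k*(k+1)+1)^(3*(k-ℓ)) * N^ℓ)
      ≤ k ^ 2 * (4 * k) ^ (6 * (k - ℓ)) * N ^ ℓ := by
    have hbase : 2*k*(k+1)+1 ≤ (4*k)^2 := by nlinarith
    have hpow : (2*k*(k+1)+1)^(3*(k-ℓ)) ≤ ((4*k)^2)^(3*(k-ℓ)) :=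
      Nat.pow_le_pow_left hbase _
    have hexp : ((4*k)^2)^(3*(k-ℓ)) = (4*k)^(6*(k-ℓ)) := by
      rw [← pow_mul]
      congr 1
      ring
    calc k * k * ((2*k*(k+1)+1)^(3*(k-ℓ)) * N^ℓ)
        ≤ k * k * (((4*k)^2)^(3*(k-ℓ)) * N^ℓ) := by
          exact Nat.mul_le_mul_left _ (Nat.mul_le_mul_right _ hpow)
      _ = k ^ 2 * (4 * k) ^ (6 * (k - ℓ)) * N ^ ℓ := by
          rw [hexp]; ring
  omega
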